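/- Let n ≥ 3 be odd and z : Fin n → Bool. Then the graph G_z has a perfect matching if and only if |z| is odd. -/

import Mathlib

/-- Cyclic successor on `Fin n`. -/
def cycSucc {n : ℕ} (i : Fin n) : Fin n := ⟨(i.val + 1) % n, Nat.mod_lt _ i.pos⟩

/-- The graph `G_z` on the `2n` vertices `Fin n × Fin 2`, where `(i, 0)` is the top vertex
`t_i` and `(i, 1)` is the bottom vertex `b_i`.  For each `i`, if `z i = false` there are
edges `{t_i, t_{i+1}}` and `{b_i, b_{i+1}}`, and if `z i = true` there are edges
`{t_i, b_{i+1}}` and `{b_i, t_{i+1}}` (indices mod `n`). -/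
def Gz (n : ℕ) (z : Fin n → Bool) : SimpleGraph (Fin n × Fin 2) :=
  SimpleGraph.fromEdgeSet { e | ∃ i : Fin n,
    if z i then
      e = s((i, 0), (cycSucc i, 1)) ∨ e = s((i, 1), (cycSucc i, 0))
    else
      e = s((i, 0), (cycSucc i, 0)) ∨ e = s((i, 1), (cycSucc i, 1)) }

namespace GzAux

/-- Cyclic predecessor on `Fin n`. -/
def cycPred {n : ℕ} (i : Fin n) : Fin n := ⟨(i.val + (n - 1)) % n, Nat.mod_lt _ i.pos⟩

variable {n : ℕ}

lemma cycSucc_val (i : Fin n) : (cycSucc i).val = (i.val + 1) % n := rfl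
lemma cycPred_val (i : Fin n) : (cycPred i).val = (i.val + (n - 1)) % n := rfl

lemma cycSucc_val_of_lt {i : Fin n} (h : i.val + 1 < n) : (cycSucc i).val = i.val + 1 :=
  Nat.mod_eq_of_lt h

lemma cycSucc_val_last {i : Fin n} (h : i.val = n - 1) : (cycSucc i).val = 0 := by
  have hi := i.isLt
  rw [cycSucc_val, h, Nat.sub_add_cancel (by omega), Nat.mod_self]

lemma cycPred_val_of_pos {i : Fin n} (h : 0 < i.val) : (cycPred i).val = i.val - 1 := by
  have hi := i.isLt
  rw [cycPred_val]
  have h1 : i.val + (n - 1) = (i.val - 1) + 1 * n := by omega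
  rw [h1, Nat.add_mul_mod_self_right, Nat.mod_eq_of_lt (by omega)]

lemma cycPred_val_zero {i : Fin n} (h : i.val = 0) : (cycPred i).val = n - 1 := by
  have hi := i.isLt
  rw [cycPred_val, h, Nat.zero_add, Nat.mod_eq_of_lt (by omega)]

lemma cycSucc_cycPred (i : Fin n) : cycSucc (cycPred i) = i := by
  have hi := i.isLt
  apply Fin.ext
  rcases Nat.eq_zero_or_pos i.val with h | h
  · rw [cycSucc_val_last (cycPred_val_zero h), h]
  · rw [cycSucc_val_of_lt (by rw [cycPred_val_of_pos h]; omega), cycPred_val_of_pos h]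
    omega

lemma cycPred_cycSucc (i : Fin n) : cycPred (cycSucc i) = i := by
  have hi := i.isLt
  apply Fin.ext
  rcases Nat.lt_or_ge (i.val + 1) n with h | h
  · rw [cycPred_val_of_pos (by rw [cycSucc_val_of_lt h]; omega), cycSucc_val_of_lt h]
    omega
  · have hl : i.val = n - 1 := by omega
    rw [cycPred_val_zero (cycSucc_val_last hl), hl]

lemma cycSucc_ne (hn : 2 ≤ n) (i : Fin n) : cycSucc i ≠ i := by
  intro h
  have hv := congrArg Fin.val h
  have hi := i.isLt
  rcases Nat.lt_or_ge (i.val + 1) n with h1 | h1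
  · rw [cycSucc_val_of_lt h1] at hv; omega
  · rw [cycSucc_val_last (by omega)] at hv; omega

/-- The twist indicator of `z` at `i`, valued in `Fin 2`. -/
def cc (z : Fin n → Bool) (i : Fin n) : Fin 2 := if z i then 1 else 0

/-- The prefix twist parity. -/
def par (z : Fin n → Bool) (i : Fin n) : Fin 2 :=
  ∑ j ∈ Finset.univ.filter (fun j : Fin n => j.val < i.val), cc z j

/-- The total twist parity. -/
def tot (z : Fin n → Bool) : Fin 2 := ∑ j, cc z j

variable {z : Fin n → Bool}

lemma par_eq_zero {i : Fin n} (h : i.val = 0) : par z i = 0 := by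
  unfold par
  rw [Finset.filter_false_of_mem (fun j _ => by omega), Finset.sum_empty]

lemma par_cycSucc {i : Fin n} (h : i.val + 1 < n) :
    par z (cycSucc i) = par z i + cc z i := by
  unfold par
  rw [cycSucc_val_of_lt h]
  have he : Finset.univ.filter (fun j : Fin n => j.val < i.val + 1)
      = insert i (Finset.univ.filter (fun j : Fin n => j.val < i.val)) := by
    ext j
    simp only [Finset.mem_filter, Finset.mem_univ, true_and, Finset.mem_insert, Fin.ext_iff]
    omega
  rw [he, Finset.sum_insert (by simp)]
  exact add_comm _ _

lemma par_last {i : Fin n} (h : i.val = n - 1) :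
    par z i + cc z i = tot z := by
  unfold par tot
  have hi := i.isLt
  have he : (Finset.univ : Finset (Fin n))
      = insert i (Finset.univ.filter (fun j : Fin n => j.val < i.val)) := by
    ext j
    have hj := j.isLt
    simp only [Finset.mem_filter, Finset.mem_univ, true_and, Finset.mem_insert, Fin.ext_iff, true_iff]
    omega
  conv_rhs => rw [he]
  rw [Finset.sum_insert (by simp)]
  exact add_comm _ _

open Fin.CommRing in
lemma tot_eq_card : tot z = ((Finset.univ.filter fun i => z i = true).card : Fin 2) := by
  unfold tot cc
  rw [Finset.sum_boole]

open Fin.CommRing in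
lemma odd_iff_cast (m : ℕ) : Odd m ↔ (m : Fin 2) = 1 := by
  rw [Nat.odd_iff, Fin.ext_iff, Fin.val_natCast]; simp

/-- Characterization of adjacency in `Gz`. -/
lemma adj_iff {v w : Fin n × Fin 2} :
    (Gz n z).Adj v w ↔ v ≠ w ∧ ∃ (i : Fin n) (a : Fin 2),
      (v = (i, a) ∧ w = (cycSucc i, a + cc z i)) ∨
      (w = (i, a) ∧ v = (cycSucc i, a + cc z i)) := by
  rw [Gz, SimpleGraph.fromEdgeSet_adj]
  simp only [Set.mem_setOf_eq]
  constructor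
  · rintro ⟨⟨i, hi⟩, hne⟩
    refine ⟨hne, i, ?_⟩
    cases hz : z i <;> rw [hz] at hi <;> simp only [if_true, if_false, Bool.false_eq_true,
      ite_true, ite_false] at hi <;>
    rcases hi with h | h <;> rw [Sym2.eq_iff] at h <;>
    rcases h with ⟨h1, h2⟩ | ⟨h1, h2⟩
    · exact ⟨0, Or.inl ⟨h1, by rw [h2]; simp [cc, hz]⟩⟩
    · exact ⟨0, Or.inr ⟨h2, by rw [h1]; simp [cc, hz]⟩⟩
    · exact ⟨1, Or.inl ⟨h1, by rw [h2]; simp [cc, hz]⟩⟩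
    · exact ⟨1, Or.inr ⟨h2, by rw [h1]; simp [cc, hz]⟩⟩
    · exact ⟨0, Or.inl ⟨h1, by rw [h2]; simp [cc, hz]⟩⟩
    · exact ⟨0, Or.inr ⟨h2, by rw [h1]; simp [cc, hz]⟩⟩
    · exact ⟨1, Or.inl ⟨h1, by rw [h2]; simp [cc, hz]⟩⟩
    · exact ⟨1, Or.inr ⟨h2, by rw [h1]; simp [cc, hz]⟩⟩
  · rintro ⟨hne, i, a, hc⟩
    refine ⟨⟨i, ?_⟩, hne⟩
    have ha : a = 0 ∨ a = 1 := by omega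
    cases hz : z i <;> simp only [if_true, if_false, Bool.false_eq_true, ite_true, ite_false] <;>
    rcases ha with rfl | rfl <;>
    rcases hc with ⟨rfl, rfl⟩ | ⟨rfl, rfl⟩ <;>
    simp [Sym2.eq_iff, cc, hz]

lemma adj_edge (hn : 2 ≤ n) (i : Fin n) (a : Fin 2) :
    (Gz n z).Adj (i, a) (cycSucc i, a + cc z i) := by
  rw [adj_iff]
  refine ⟨?_, i, a, Or.inl ⟨rfl, rfl⟩⟩
  intro h
  exact cycSucc_ne hn i (congrArg Prod.fst h).symm

lemma f2_cancel : ∀ x y c : Fin 2, x + c = y + c → x = y := by decide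
lemma f2_eq_of_add_zero : ∀ x y : Fin 2, x + y = 0 → x = y := by decide
lemma f2_eq_of_ne : ∀ x y : Fin 2, x + y ≠ 0 → x = 1 + y := by decide
lemma f2_addadd : ∀ x y : Fin 2, x + y + y = x := by decide

lemma invariant (htot : tot z = 0) {v w : Fin n × Fin 2}
    (h : (Gz n z).Adj v w) (hv : v.2 = par z v.1) : w.2 = par z w.1 := by
  rw [adj_iff] at h
  obtain ⟨-, i, a, ⟨rfl, rfl⟩ | ⟨rfl, rfl⟩⟩ := h
  · simp only at hv ⊢
    rcases Nat.lt_or_ge (i.val + 1) n with h1 | h1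
    · rw [par_cycSucc h1, hv]
    · have hl : i.val = n - 1 := by have := i.isLt; omega
      rw [par_eq_zero (cycSucc_val_last hl)]
      have h2 : par z i + cc z i = 0 := by rw [par_last hl, htot]
      rw [hv]
      exact h2
  · simp only at hv ⊢
    rcases Nat.lt_or_ge (i.val + 1) n with h1 | h1
    · rw [par_cycSucc h1] at hv
      exact f2_cancel _ _ _ hv
    · have hl : i.val = n - 1 := by have := i.isLt; omega
      rw [par_eq_zero (cycSucc_val_last hl)] at hv
      have h2 : par z i + cc z i = 0 := by rw [par_last hl, htot]
      rw [f2_eq_of_add_zero _ _ hv, f2_eq_of_add_zero _ _ h2]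

lemma no_pm (hn : 3 ≤ n) (hodd : Odd n) (htot : tot z = 0) :
    ¬ ∃ M : (Gz n z).Subgraph, M.IsPerfectMatching := by
  rintro ⟨M, hM⟩
  classical
  let S : Set (Fin n × Fin 2) := {v | v.2 = par z v.1}
  let M' : (Gz n z).Subgraph :=
    { verts := S
      Adj := fun v w => M.Adj v w ∧ v ∈ S ∧ w ∈ S
      adj_sub := fun h => M.adj_sub h.1
      edge_vert := fun h => h.2.1
      symm := ⟨fun v w h => ⟨(h.1).symm, h.2.2, h.2.1⟩⟩ }
  have hmatch : M'.IsMatching := by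
    intro v hv
    obtain ⟨w, hw, huniq⟩ := hM.1 (hM.2 v)
    have hwS : w ∈ S := invariant htot (M.adj_sub hw) hv
    exact ⟨w, ⟨hw, hv, hwS⟩, fun y hy => huniq y hy.1⟩
  haveI : Fintype ↥(M'.verts) := Fintype.ofFinite _
  have heven := hmatch.even_card
  have hSim : M'.verts.toFinset = Finset.univ.image (fun i : Fin n => (i, par z i)) := by
    ext v
    simp only [Set.mem_toFinset, Finset.mem_image, Finset.mem_univ, true_and]
    constructor
    · intro h
      exact ⟨v.1, Prod.ext rfl ((show v.2 = par z v.1 from h)).symm⟩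
    · rintro ⟨i, rfl⟩
      exact rfl
  rw [hSim, Finset.card_image_of_injective _ (fun a b h => congrArg Prod.fst h),
    Finset.card_univ, Fintype.card_fin] at heven
  exact (Nat.not_even_iff_odd.mpr hodd) heven

/-- The partner function of the explicit perfect matching (when `tot z = 1`). -/
def pf (n : ℕ) (z : Fin n → Bool) (v : Fin n × Fin 2) : Fin n × Fin 2 :=
  if v.2 + par z v.1 = 0 then
    if v.1.val = n - 1 then (cycSucc v.1, 1 + par z (cycSucc v.1))
    else if v.1.val % 2 = 0 then (cycSucc v.1, 0 + par z (cycSucc v.1))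
    else (cycPred v.1, 0 + par z (cycPred v.1))
  else
    if v.1.val = 0 then (cycPred v.1, 0 + par z (cycPred v.1))
    else if v.1.val % 2 = 1 then (cycSucc v.1, 1 + par z (cycSucc v.1))
    else (cycPred v.1, 1 + par z (cycPred v.1))

variable {v : Fin n × Fin 2}

lemma pf_eval1 (hb : v.2 + par z v.1 = 0) (hl : v.1.val = n - 1) :
    pf n z v = (cycSucc v.1, 1 + par z (cycSucc v.1)) := by simp [pf, hb, hl]

lemma pf_eval2 (hb : v.2 + par z v.1 = 0) (hl : v.1.val ≠ n - 1) (hp : v.1.val % 2 = 0) :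
    pf n z v = (cycSucc v.1, 0 + par z (cycSucc v.1)) := by simp [pf, hb, hl, hp]

lemma pf_eval3 (hb : v.2 + par z v.1 = 0) (hl : v.1.val ≠ n - 1) (hp : v.1.val % 2 ≠ 0) :
    pf n z v = (cycPred v.1, 0 + par z (cycPred v.1)) := by simp [pf, hb, hl, hp]

lemma pf_eval4 (hb : v.2 + par z v.1 ≠ 0) (h0 : v.1.val = 0) :
    pf n z v = (cycPred v.1, 0 + par z (cycPred v.1)) := by simp [pf, hb, h0]

lemma pf_eval5 (hb : v.2 + par z v.1 ≠ 0) (h0 : v.1.val ≠ 0) (hp : v.1.val % 2 = 1) :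
    pf n z v = (cycSucc v.1, 1 + par z (cycSucc v.1)) := by simp [pf, hb, h0, hp]

lemma pf_eval6 (hb : v.2 + par z v.1 ≠ 0) (h0 : v.1.val ≠ 0) (hp : v.1.val % 2 ≠ 1) :
    pf n z v = (cycPred v.1, 1 + par z (cycPred v.1)) := by simp [pf, hb, h0, hp]

lemma f2_ne : ∀ y : Fin 2, 1 + y + y ≠ 0 := by decide
lemma f2_z : ∀ y : Fin 2, (0 : Fin 2) + y + y = 0 := by decide

lemma pf_adj (hn : 3 ≤ n) (hodd : Odd n) (htot : tot z = 1) (v : Fin n × Fin 2) :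
    (Gz n z).Adj v (pf n z v) := by
  obtain ⟨i, a⟩ := v
  have hi := i.isLt
  have hno : n % 2 = 1 := Nat.odd_iff.mp hodd
  by_cases hb : a + par z i = 0
  · by_cases hl : i.val = n - 1
    · rw [pf_eval1 hb hl]
      have h1 : par z (cycSucc i) = 0 := par_eq_zero (cycSucc_val_last hl)
      have h4 := par_last (z := z) hl
      rw [htot] at h4
      have h3 : (1 : Fin 2) + par z (cycSucc i) = a + cc z i := by
        rw [h1, f2_eq_of_add_zero _ _ hb, h4]
        decide
      rw [h3]
      exact adj_edge (by omega) i a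
    · by_cases hp : i.val % 2 = 0
      · rw [pf_eval2 hb hl hp]
        have hlt : i.val + 1 < n := by omega
        have h3 : (0 : Fin 2) + par z (cycSucc i) = a + cc z i := by
          rw [par_cycSucc hlt, f2_eq_of_add_zero _ _ hb, zero_add]
        rw [h3]
        exact adj_edge (by omega) i a
      · rw [pf_eval3 hb hl hp]
        have hpos : 0 < i.val := by omega
        have hjv := cycPred_val_of_pos (i := i) hpos
        have hlt : (cycPred i).val + 1 < n := by omega
        have h2 : par z (cycPred i) + cc z (cycPred i) = a := by
          rw [← par_cycSucc hlt, cycSucc_cycPred]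
          exact (f2_eq_of_add_zero _ _ hb).symm
        have key := (adj_edge (z := z) (by omega) (cycPred i) (par z (cycPred i))).symm
        rw [cycSucc_cycPred, h2] at key
        rw [zero_add]
        exact key
  · by_cases h0 : i.val = 0
    · rw [pf_eval4 hb h0]
      have hjv := cycPred_val_zero (i := i) h0
      have h2 : par z (cycPred i) + cc z (cycPred i) = a := by
        rw [par_last hjv, htot, f2_eq_of_ne _ _ hb, par_eq_zero h0]
        decide
      have key := (adj_edge (z := z) (by omega) (cycPred i) (par z (cycPred i))).symm
      rw [cycSucc_cycPred, h2] at key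
      rw [zero_add]
      exact key
    · by_cases hp : i.val % 2 = 1
      · rw [pf_eval5 hb h0 hp]
        have hlt : i.val + 1 < n := by omega
        have h3 : (1 : Fin 2) + par z (cycSucc i) = a + cc z i := by
          rw [par_cycSucc hlt, f2_eq_of_ne _ _ hb, add_assoc]
        rw [h3]
        exact adj_edge (by omega) i a
      · rw [pf_eval6 hb h0 hp]
        have hpos : 0 < i.val := by omega
        have hjv := cycPred_val_of_pos (i := i) hpos
        have hlt : (cycPred i).val + 1 < n := by omega
        have h2 : (1 : Fin 2) + par z (cycPred i) + cc z (cycPred i) = a := by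
          rw [add_assoc, ← par_cycSucc hlt, cycSucc_cycPred]
          exact (f2_eq_of_ne _ _ hb).symm
        have key := (adj_edge (z := z) (by omega) (cycPred i) (1 + par z (cycPred i))).symm
        rw [cycSucc_cycPred, h2] at key
        exact key

lemma pf_invol (hn : 3 ≤ n) (hodd : Odd n) (v : Fin n × Fin 2) :
    pf n z (pf n z v) = v := by
  obtain ⟨i, a⟩ := v
  have hi := i.isLt
  have hno : n % 2 = 1 := Nat.odd_iff.mp hodd
  by_cases hb : a + par z i = 0
  · by_cases hl : i.val = n - 1
    · rw [pf_eval1 (v := (i, a)) hb hl,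
        pf_eval4 (v := (cycSucc i, 1 + par z (cycSucc i))) (f2_ne _) (cycSucc_val_last hl),
        cycPred_cycSucc]
      exact congrArg (Prod.mk i) (by rw [zero_add]; exact (f2_eq_of_add_zero _ _ hb).symm)
    · by_cases hp : i.val % 2 = 0
      · have hlt : i.val + 1 < n := by omega
        have hsv := cycSucc_val_of_lt (i := i) hlt
        rw [pf_eval2 (v := (i, a)) hb hl hp,
          pf_eval3 (v := (cycSucc i, 0 + par z (cycSucc i))) (f2_z _)
            (by rw [hsv]; omega) (by rw [hsv]; omega), cycPred_cycSucc]
        exact congrArg (Prod.mk i) (by rw [zero_add]; exact (f2_eq_of_add_zero _ _ hb).symm)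
      · have hpos : 0 < i.val := by omega
        have hpv := cycPred_val_of_pos (i := i) hpos
        rw [pf_eval3 (v := (i, a)) hb hl hp,
          pf_eval2 (v := (cycPred i, 0 + par z (cycPred i))) (f2_z _)
            (by rw [hpv]; omega) (by rw [hpv]; omega), cycSucc_cycPred]
        exact congrArg (Prod.mk i) (by rw [zero_add]; exact (f2_eq_of_add_zero _ _ hb).symm)
  · by_cases h0 : i.val = 0
    · have hpv := cycPred_val_zero (i := i) h0
      rw [pf_eval4 (v := (i, a)) hb h0,
        pf_eval1 (v := (cycPred i, 0 + par z (cycPred i))) (f2_z _) hpv, cycSucc_cycPred]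
      exact congrArg (Prod.mk i) (f2_eq_of_ne _ _ hb).symm
    · by_cases hp : i.val % 2 = 1
      · have hlt : i.val + 1 < n := by omega
        have hsv := cycSucc_val_of_lt (i := i) hlt
        rw [pf_eval5 (v := (i, a)) hb h0 hp,
          pf_eval6 (v := (cycSucc i, 1 + par z (cycSucc i))) (f2_ne _)
            (by rw [hsv]; omega) (by rw [hsv]; omega), cycPred_cycSucc]
        exact congrArg (Prod.mk i) (f2_eq_of_ne _ _ hb).symm
      · have hpos : 0 < i.val := by omega
        have hpv := cycPred_val_of_pos (i := i) hpos
        rw [pf_eval6 (v := (i, a)) hb h0 hp,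
          pf_eval5 (v := (cycPred i, 1 + par z (cycPred i))) (f2_ne _)
            (by rw [hpv]; omega) (by rw [hpv]; omega), cycSucc_cycPred]
        exact congrArg (Prod.mk i) (f2_eq_of_ne _ _ hb).symm

end GzAux

theorem Gz_perfectMatching_iff_odd (n : ℕ) (hn : 3 ≤ n) (hodd : Odd n) (z : Fin n → Bool) :
    (∃ M : (Gz n z).Subgraph, M.IsPerfectMatching) ↔
      Odd (Finset.univ.filter fun i => z i = true).card := by
  classical
  rw [GzAux.odd_iff_cast, ← GzAux.tot_eq_card]
  constructor
  · intro hM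
    by_contra hne
    exact GzAux.no_pm hn hodd ((by decide : ∀ x : Fin 2, x ≠ 1 → x = 0) _ hne) hM
  · intro htot
    refine ⟨{ verts := Set.univ
              Adj := fun v w => GzAux.pf n z v = w
              adj_sub := ?_
              edge_vert := fun _ => Set.mem_univ _
              symm := ?_ }, ?_, fun v => Set.mem_univ _⟩
    · intro v w h
      rw [← h]
      exact GzAux.pf_adj hn hodd htot v
    · refine ⟨fun v w h => ?_⟩
      rw [← h, GzAux.pf_invol hn hodd]
    · intro v _
      exact ⟨GzAux.pf n z v, rfl, fun y hy => (show GzAux.pf n z v = y from hy).symm⟩
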